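/- Let S : D → G be a map from an additive monoid of test functions D into a group G satisfying S(0) = 1 and the causal factorization property: S(f + g + h) = S(f + g)·S(g)⁻¹·S(g + h) whenever supp f is causally later than supp h. Define the relative S-matrix S_g(f) := S(g)⁻¹ S(g + f). Then S_g also satisfies causal factorization: S_g(f + g' + h) = S_g(f + g')·S_g(g')⁻¹·S_g(g' + h) whenever supp f is causally later than supp h. -/
import Mathlib

/-- Let `S : D → G` satisfy `S 0 = 1` and the causal
factorization property `S(f+g+h) = S(f+g)·S(g)⁻¹·S(g+h)` whenever `supp f` is
causally later than `supp h` (relation `later f h`).  Then the relative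
S-matrix `S_g(f) = S(g)⁻¹ S(g+f)` also satisfies causal factorization. -/
theorem timeslice_stmt4 {D G : Type*} [AddCommMonoid D] [Group G]
    (S : D → G) (later : D → D → Prop)
    (hS0 : S 0 = 1)
    (hfact : ∀ f g h : D, later f h → S (f + g + h) = S (f + g) * (S g)⁻¹ * S (g + h))
    (g : D) (Sg : D → G) (hSg : ∀ x, Sg x = (S g)⁻¹ * S (g + x))
    (f g' h : D) (hlat : later f h) :
    Sg (f + g' + h) = Sg (f + g') * (Sg g')⁻¹ * Sg (g' + h) := by
  have key := hfact f (g + g') h hlat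
  simp only [hSg]
  have e1 : g + (f + g' + h) = f + (g + g') + h := by abel
  have e2 : g + (f + g') = f + (g + g') := by abel
  have e3 : g + g' + h = g + (g' + h) := by abel
  rw [e1, e2, key, e3]
  group
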